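/- Let I : X → [0,∞] be a good rate function on a metric space X and C ⊆ X a closed set. Then lim_{λ→0⁺} inf_{x ∈ C_λ} I(x) = inf_{x ∈ C} I(x), where C_λ = {x : dist(x, C) ≤ λ}. -/

import Mathlib

open Filter Metric Set Topology
open scoped ENNReal NNReal

/-- For a good rate function `I` on a metric space and a closed set `C`,
`inf_{C_λ} I → inf_C I` as `λ → 0⁺`, where `C_λ = {x : dist(x,C) ≤ λ}`. -/
theorem good_rate_function_inf_fattening_tendsto {X : Type*} [MetricSpace X]
    (I : X → ℝ≥0∞) (hIlsc : LowerSemicontinuous I)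
    (hIcomp : ∀ α : ℝ≥0, IsCompact {x : X | I x ≤ (α : ℝ≥0∞)})
    (C : Set X) (hC : IsClosed C) :
    Tendsto (fun lam : ℝ => ⨅ x ∈ {x : X | ∃ y ∈ C, dist x y ≤ lam}, I x)
      (𝓝[>] 0) (𝓝 (⨅ x ∈ C, I x)) := by
  set g : ℝ → ℝ≥0∞ := fun lam => ⨅ x ∈ {x : X | ∃ y ∈ C, dist x y ≤ lam}, I x with hg
  have hanti : Antitone g := by
    intro a b hab
    exact iInf_le_iInf_of_subset fun x ⟨y, hy, hd⟩ => ⟨y, hy, hd.trans hab⟩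
  have htend := hanti.tendsto_nhdsGT 0
  suffices hS : sSup (g '' Ioi 0) = ⨅ x ∈ C, I x by
    rw [← hS]; exact htend
  apply le_antisymm
  · apply sSup_le
    rintro b ⟨lam, hlam, rfl⟩
    exact iInf_le_iInf_of_subset fun x hx => ⟨x, hx, by simp [le_of_lt (show (0:ℝ) < lam from hlam)]⟩
  · by_contra hlt
    push_neg at hlt
    set S := sSup (g '' Ioi 0) with hSdef
    obtain ⟨c, hSc, hcI⟩ := exists_between hlt
    have hct : c ≠ ⊤ := (hcI.trans_le le_top).ne
    set α : ℝ≥0 := c.toNNReal with hα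
    have hcα : (α : ℝ≥0∞) = c := ENNReal.coe_toNNReal hct
    have hpick : ∀ n : ℕ, ∃ x : X, (∃ y ∈ C, dist x y ≤ 1 / (n + 1)) ∧ I x ≤ (α : ℝ≥0∞) := by
      intro n
      have hpos : (0:ℝ) < 1 / (n + 1) := by positivity
      have hgle : g (1 / (n + 1)) ≤ S := le_sSup ⟨1 / (n + 1), hpos, rfl⟩
      have hlt' : (⨅ x ∈ {x : X | ∃ y ∈ C, dist x y ≤ 1 / ((n : ℝ) + 1)}, I x) < c :=
        hgle.trans_lt hSc
      rw [iInf_lt_iff] at hlt'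
      obtain ⟨x, hx⟩ := hlt'
      rw [iInf_lt_iff] at hx
      obtain ⟨hxmem, hxlt⟩ := hx
      exact ⟨x, hxmem, hcα ▸ hxlt.le⟩
    choose x hxC hxI using hpick
    choose y hyC hxy using hxC
    obtain ⟨z, hzK, φ, hφ, hzx⟩ := (hIcomp α).tendsto_subseq (fun n => hxI n)
    -- y ∘ φ also tends to z
    have hyz : Tendsto (fun n => y (φ n)) atTop (𝓝 z) := by
      rw [tendsto_iff_dist_tendsto_zero]
      have hbound : ∀ n, dist (y (φ n)) z ≤ 1 / (φ n + 1) + dist (x (φ n)) z := by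
        intro n
        calc dist (y (φ n)) z ≤ dist (y (φ n)) (x (φ n)) + dist (x (φ n)) z :=
              dist_triangle _ _ _
          _ ≤ 1 / (φ n + 1) + dist (x (φ n)) z := by
              rw [dist_comm]; exact add_le_add_left (hxy (φ n)) _
      have h1 : Tendsto (fun n => 1 / ((φ n : ℝ) + 1) + dist (x (φ n)) z) atTop (𝓝 0) := by
        have ha : Tendsto (fun n => 1 / ((φ n : ℝ) + 1)) atTop (𝓝 0) :=
          (tendsto_one_div_add_atTop_nhds_zero_nat).comp hφ.tendsto_atTop
        have hb : Tendsto (fun n => dist (x (φ n)) z) atTop (𝓝 0) :=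
          tendsto_iff_dist_tendsto_zero.mp hzx
        simpa using ha.add hb
      exact squeeze_zero (fun n => dist_nonneg) hbound h1
    have hzC : z ∈ C := hC.mem_of_tendsto hyz (Eventually.of_forall fun n => hyC (φ n))
    have hIz : c < I z := hcI.trans_le (iInf₂_le z hzC)
    have := (hIlsc z c hIz).eventually_nhds
    -- eventually along the sequence, c < I (x (φ n)), contradicting I (x (φ n)) ≤ α
    have hev : ∀ᶠ n in atTop, c < I (x (φ n)) :=
      hzx.eventually (hIlsc z c hIz)
    obtain ⟨n, hn⟩ := hev.exists
    exact absurd hn (not_lt.mpr (hcα ▸ hxI (φ n)))
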